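/- For every pair of complex numbers (t2, t6), the surface in ℂ³ defined by F(X,Y,Z) = X³·Y − 11664·Y³ + Z² + 324·t2·X·Y² + (189·t2³ + 5832·t6)·Y² − ((15/16)·t2⁴ + 81·t2·t6)·X·Y − ((11/32)·t2⁶ + (189/4)·t2³·t6 + 729·t6²)·Y = 0 is singular, i.e. there exists a point (X,Y,Z) ∈ ℂ³ with F(X,Y,Z) = 0 at which all three partial derivatives of F vanish. (This is the instance of type G₂ = (D₄, 𝔖₃) of the theorem that every fiber of the quotient deformation is singular.) -/

import Mathlib

/-- Type G₂ = (D₄, 𝔖₃) instance: every fiber of the quotient deformation is singular. -/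
theorem stmt_5 (t2 t6 : ℂ) :
    ∃ X Y Z : ℂ,
      X ^ 3 * Y - 11664 * Y ^ 3 + Z ^ 2 + 324 * t2 * X * Y ^ 2
        + (189 * t2 ^ 3 + 5832 * t6) * Y ^ 2
        - ((15/16) * t2 ^ 4 + 81 * t2 * t6) * X * Y
        - ((11/32) * t2 ^ 6 + (189/4) * t2 ^ 3 * t6 + 729 * t6 ^ 2) * Y = 0 ∧
      deriv (fun X' : ℂ =>
        X' ^ 3 * Y - 11664 * Y ^ 3 + Z ^ 2 + 324 * t2 * X' * Y ^ 2
          + (189 * t2 ^ 3 + 5832 * t6) * Y ^ 2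
          - ((15/16) * t2 ^ 4 + 81 * t2 * t6) * X' * Y
          - ((11/32) * t2 ^ 6 + (189/4) * t2 ^ 3 * t6 + 729 * t6 ^ 2) * Y) X = 0 ∧
      deriv (fun Y' : ℂ =>
        X ^ 3 * Y' - 11664 * Y' ^ 3 + Z ^ 2 + 324 * t2 * X * Y' ^ 2
          + (189 * t2 ^ 3 + 5832 * t6) * Y' ^ 2
          - ((15/16) * t2 ^ 4 + 81 * t2 * t6) * X * Y'
          - ((11/32) * t2 ^ 6 + (189/4) * t2 ^ 3 * t6 + 729 * t6 ^ 2) * Y') Y = 0 ∧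
      deriv (fun Z' : ℂ =>
        X ^ 3 * Y - 11664 * Y ^ 3 + Z' ^ 2 + 324 * t2 * X * Y ^ 2
          + (189 * t2 ^ 3 + 5832 * t6) * Y ^ 2
          - ((15/16) * t2 ^ 4 + 81 * t2 * t6) * X * Y
          - ((11/32) * t2 ^ 6 + (189/4) * t2 ^ 3 * t6 + 729 * t6 ^ 2) * Y) Z = 0 := by
  set c : ℂ := (15/16) * t2 ^ 4 + 81 * t2 * t6 with hc
  set d : ℂ := (11/32) * t2 ^ 6 + (189/4) * t2 ^ 3 * t6 + 729 * t6 ^ 2 with hd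
  -- find a root of the cubic X^3 - c X - d
  obtain ⟨x, hx⟩ : ∃ x : ℂ, x ^ 3 - c * x - d = 0 := by
    have h3 : (Polynomial.X ^ 3 - Polynomial.C c * Polynomial.X - Polynomial.C d : Polynomial ℂ).degree = 3 := by
      compute_degree!
    obtain ⟨x, hx⟩ := IsAlgClosed.exists_root (k := ℂ) (Polynomial.X ^ 3 - Polynomial.C c * Polynomial.X - Polynomial.C d) (by rw [h3]; norm_num)
    refine ⟨x, ?_⟩
    simpa [Polynomial.IsRoot, sub_eq_zero] using hx
  refine ⟨x, 0, 0, by ring, ?_, ?_, ?_⟩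
  · simp
  · have H : HasDerivAt (fun Y' : ℂ =>
        x ^ 3 * Y' - 11664 * Y' ^ 3 + (0:ℂ) ^ 2 + 324 * t2 * x * Y' ^ 2
          + (189 * t2 ^ 3 + 5832 * t6) * Y' ^ 2
          - c * x * Y'
          - d * Y') (x ^ 3 - c * x - d) 0 := by
      have h1 : HasDerivAt (fun Y' : ℂ => Y') 1 0 := hasDerivAt_id 0
      have h2 : HasDerivAt (fun Y' : ℂ => Y' ^ 3) (3 * 0 ^ 2 * 1) 0 := h1.pow 3
      have h3 : HasDerivAt (fun Y' : ℂ => Y' ^ 2) (2 * 0 ^ 1 * 1) 0 := h1.pow 2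
      have h4 := ((((((h1.const_mul (x ^ 3)).sub (h2.const_mul 11664)).add_const ((0:ℂ)^2)).add
        (h3.const_mul (324 * t2 * x))).add (h3.const_mul (189 * t2 ^ 3 + 5832 * t6))).sub
        (h1.const_mul (c * x))).sub (h1.const_mul d)
      exact h4.congr_deriv (by ring)
    rw [H.deriv]
    exact hx
  · simp
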